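/- arXiv:1709.08044 — 4 statements merged into one kernel-verified Lean document; each statement's English description precedes it below -/
import Mathlib

section
/- Hájek–Rényi inequality (classical): let X_1, …, X_n be independent real random variables with mean zero and finite variance, and let α_1 ≥ α_2 ≥ … ≥ α_n > 0. Then for every t > 0, P(max_{1≤k≤n} α_k |Σ_{i=1}^k X_i| ≥ t) ≤ t⁻² Σ_{k=1}^n α_k² Var(X_k). -/
open MeasureTheory ProbabilityTheory

/-- Abel-summation auxiliary lemma: if `c` is antitone (up to `n`) and nonnegative-weighted
against increments of a nonnegative sequence `w` starting at `0`, the weighted sum of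
increments is at least `c n * w n` (in particular nonnegative). -/
private lemma abel_aux (c w : ℕ → ℝ) :
    ∀ n : ℕ, w 0 = 0 → (∀ m, m ≤ n → 0 ≤ w m) →
      (∀ m, m + 1 ≤ n → c (m + 1) ≤ c m) →
      c n * w n ≤ ∑ m ∈ Finset.range n, c m * (w (m + 1) - w m)
  | 0, h0, _, _ => by simp [h0]
  | (n+1), h0, hw, hc => by
      have IH := abel_aux c w n h0 (fun m hm => hw m (hm.trans n.le_succ))
        (fun m hm => hc m (hm.trans n.le_succ))
      rw [Finset.sum_range_succ]
      have h1 : c (n+1) ≤ c n := hc n le_rfl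
      have h2 : 0 ≤ w (n+1) := hw _ le_rfl
      nlinarith

/-- Hájek–Rényi inequality: for independent, square-integrable, mean-zero real
random variables `X 1, …, X n` and a non-increasing sequence of positive reals
`α k`, for every `t > 0`,
`P(max_k α_k |S_k| ≥ t) ≤ t⁻² Σ α_k² Var(X_k)`, where `S_k = Σ_{i ≤ k} X i`. -/
theorem hajek_renyi_inequality {Ω : Type*} [MeasurableSpace Ω]
    (μ : Measure Ω) [IsProbabilityMeasure μ]
    (n : ℕ) (X : Fin n → Ω → ℝ)
    (hmeas : ∀ k, Measurable (X k))
    (hindep : iIndepFun X μ)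
    (hL2 : ∀ k, MemLp (X k) 2 μ)
    (hmean : ∀ k, ∫ ω, X k ω ∂μ = 0)
    (α : Fin n → ℝ) (hαpos : ∀ k, 0 < α k)
    (hαanti : ∀ j k : Fin n, j ≤ k → α k ≤ α j)
    (t : ℝ) (ht : 0 < t) :
    (μ {ω | ∃ k : Fin n,
        t ≤ α k * |∑ i ∈ Finset.univ.filter (· ≤ k), X i ω|}).toReal
      ≤ (∑ k, (α k) ^ 2 * variance (X k) μ) / t ^ 2 := by
  classical
  -- ℕ-indexed partial sums
  set P : ℕ → Ω → ℝ :=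
    fun m ω => ∑ i ∈ Finset.univ.filter (fun i : Fin n => (i : ℕ) < m), X i ω with hPdef
  set c : ℕ → ℝ := fun m => if h : m < n then (α ⟨m, h⟩) ^ 2 else 0 with hcdef
  set B : ℕ → Set Ω :=
    fun m => {ω | ∃ j, j < m ∧ j < n ∧ t ^ 2 ≤ c j * (P (j + 1) ω) ^ 2} with hBdef
  have hPmeas : ∀ m, Measurable (P m) := fun m =>
    Finset.measurable_sum _ fun i _ => hmeas i
  have hPL2 : ∀ m, MemLp (P m) 2 μ := fun m =>
    memLp_finset_sum _ fun i _ => hL2 i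
  have hPsq_int : ∀ m, Integrable (fun ω => P m ω ^ 2) μ := fun m => (hPL2 m).integrable_sq
  have hXint : ∀ k, Integrable (X k) μ := fun k => (hL2 k).integrable one_le_two
  have hXsq_int : ∀ k, Integrable (fun ω => X k ω ^ 2) μ := fun k => (hL2 k).integrable_sq
  have hPint : ∀ m, Integrable (P m) μ := fun m => (hPL2 m).integrable one_le_two
  have hc0 : ∀ m, 0 ≤ c m := by
    intro m
    simp only [hcdef]
    split
    · positivity
    · exact le_rfl
  have hcanti : ∀ m, m + 1 ≤ n → c (m + 1) ≤ c m := by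
    intro m hm
    have h1 : m < n := lt_of_lt_of_le (Nat.lt_succ_self m) hm
    simp only [hcdef]
    rw [dif_pos h1]
    by_cases h2 : m + 1 < n
    · rw [dif_pos h2]
      have hle := hαanti ⟨m, h1⟩ ⟨m + 1, h2⟩ (by simp [Fin.le_def])
      nlinarith [hαpos (⟨m + 1, h2⟩ : Fin n), hαpos (⟨m, h1⟩ : Fin n)]
    · rw [dif_neg h2]
      positivity
  have hBmeas : ∀ m, MeasurableSet (B m) := by
    intro m
    have : B m = ⋃ (j : ℕ), ⋃ (_ : j < m ∧ j < n),
        {ω | t ^ 2 ≤ c j * (P (j + 1) ω) ^ 2} := by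
      ext ω
      simp only [hBdef, Set.mem_setOf_eq, Set.mem_iUnion]
      tauto
    rw [this]
    exact MeasurableSet.iUnion fun j => MeasurableSet.iUnion fun _ =>
      measurableSet_le measurable_const (measurable_const.mul ((hPmeas _).pow_const 2))
  have hBsub : ∀ m, B m ⊆ B (m + 1) := by
    rintro m ω ⟨j, h1, h2⟩
    exact ⟨j, h1.trans m.lt_succ_self, h2⟩
  have hB0 : B 0 = ∅ := by
    ext ω; simp [hBdef]
  -- the finset of indices below m
  -- independence of P m and X ⟨m, _⟩
  have hPXind : ∀ (m : ℕ) (hm : m < n), IndepFun (P m) (X ⟨m, hm⟩) μ := by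
    intro m hm
    set s : Finset (Fin n) := Finset.univ.filter (fun i : Fin n => (i : ℕ) < m) with hsdef
    have hks : (⟨m, hm⟩ : Fin n) ∉ s := by simp [hsdef]
    have e : (∑ j ∈ s, X j) = P m := by
      funext ω
      rw [Finset.sum_apply]
    exact e ▸ hindep.indepFun_finsetSum_of_notMem hmeas hks
  have hPX_int : ∀ (m : ℕ) (hm : m < n),
      Integrable (fun ω => P m ω * X ⟨m, hm⟩ ω) μ := by
    intro m hm
    have := (hPXind m hm).integrable_mul (hPint m) (hXint ⟨m, hm⟩)
    exact this
  -- key orthogonality: indicator of B m (or univ) times P m is independent of X m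
  have hcross : ∀ (m : ℕ) (hm : m < n) (D : Set Ω), D = Set.univ ∨ D = B m →
      ∫ ω, D.indicator (fun ω => P m ω * X ⟨m, hm⟩ ω) ω ∂μ = 0 := by
    intro m hm D hD
    set k : Fin n := ⟨m, hm⟩ with hkdef
    have hDm : MeasurableSet D := by
      rcases hD with h | h
      · rw [h]; exact MeasurableSet.univ
      · rw [h]; exact hBmeas m
    -- reduce to independence of the indicator-weighted partial sum and X k
    have hindF : IndepFun (D.indicator (P m)) (X k) μ := by
      rcases hD with h | h
      · rw [h, Set.indicator_univ]
        exact hPXind m hm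
      · -- the tuple approach
        set s : Finset (Fin n) := Finset.univ.filter (fun i : Fin n => (i : ℕ) < m) with hsdef
        have hks : k ∉ s := by simp [hsdef, hkdef]
        have base : IndepFun (fun ω (i : s) => X i ω)
            (fun ω (i : ({k} : Finset (Fin n))) => X i ω) μ :=
          hindep.indepFun_finset s {k}
            (by simpa [Finset.disjoint_singleton_right] using hks) hmeas
        set g : (s → ℝ) → ℝ := fun v => ∑ i : s, v i with hgdef
        have hg : Measurable g :=
          Finset.measurable_sum _ fun i _ => measurable_pi_apply i
        set q : ℕ → (s → ℝ) → ℝ :=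
          fun j v => ∑ i : s, if ((i : Fin n) : ℕ) < j + 1 then v i else 0 with hqdef
        have hq : ∀ j, Measurable (q j) := by
          intro j
          apply Finset.measurable_sum
          intro i _
          by_cases hij : ((i : Fin n) : ℕ) < j + 1
          · simp only [if_pos hij]
            exact measurable_pi_apply i
          · simp only [if_neg hij]
            exact measurable_const
        set C : Set (s → ℝ) :=
          {v | ∃ j, j < m ∧ j < n ∧ t ^ 2 ≤ c j * (q j v) ^ 2} with hCdef
        have hC : MeasurableSet C := by
          have : C = ⋃ (j : ℕ), ⋃ (_ : j < m ∧ j < n),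
              {v | t ^ 2 ≤ c j * (q j v) ^ 2} := by
            ext v
            simp only [hCdef, Set.mem_setOf_eq, Set.mem_iUnion]
            tauto
          rw [this]
          exact MeasurableSet.iUnion fun j => MeasurableSet.iUnion fun _ =>
            measurableSet_le measurable_const (measurable_const.mul ((hq j).pow_const 2))
        have hφ : Measurable (C.indicator g) := hg.indicator hC
        -- pointwise identification
        have hqP : ∀ (j : ℕ), j < m → ∀ ω, q j (fun i : s => X i ω) = P (j + 1) ω := by
          intro j hj ω
          have hsub : Finset.univ.filter (fun i : Fin n => (i : ℕ) < j + 1) =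
              s.filter (fun i : Fin n => (i : ℕ) < j + 1) := by
            rw [hsdef, Finset.filter_filter]
            apply Finset.filter_congr
            intro i _
            constructor
            · intro hi; exact ⟨by omega, hi⟩
            · intro hi; exact hi.2
          have e1' : q j (fun i : s => X i ω)
              = ∑ i ∈ s, if (i : ℕ) < j + 1 then X i ω else 0 :=
            Finset.sum_coe_sort s (fun i : Fin n => if (i : ℕ) < j + 1 then X i ω else 0)
          rw [e1', ← Finset.sum_filter, ← hsub]
        have hmem : ∀ ω, (fun i : s => X i ω) ∈ C ↔ ω ∈ B m := by
          intro ω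
          simp only [hCdef, hBdef, Set.mem_setOf_eq]
          constructor
          · rintro ⟨j, hj1, hj2, hj3⟩
            exact ⟨j, hj1, hj2, by rwa [hqP j hj1 ω] at hj3⟩
          · rintro ⟨j, hj1, hj2, hj3⟩
            exact ⟨j, hj1, hj2, by rwa [hqP j hj1 ω]⟩
        have e1 : (C.indicator g) ∘ (fun ω (i : s) => X i ω)
            = (B m).indicator (P m) := by
          funext ω
          by_cases hω : ω ∈ B m
          · have : (fun i : s => X i ω) ∈ C := (hmem ω).2 hω
            simp only [Function.comp_apply, Set.indicator_of_mem this,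
              Set.indicator_of_mem hω]
            exact Finset.sum_coe_sort s (fun i : Fin n => X i ω)
          · have : (fun i : s => X i ω) ∉ C := fun hc => hω ((hmem ω).1 hc)
            simp [Function.comp_apply, Set.indicator_of_notMem this,
              Set.indicator_of_notMem hω]
        have h2 := base.comp hφ
          (measurable_pi_apply (⟨k, by simp⟩ : ({k} : Finset (Fin n))))
        rw [h] 
        have e2 : ((fun v : ({k} : Finset (Fin n)) → ℝ => v ⟨k, by simp⟩) ∘
            (fun ω (i : ({k} : Finset (Fin n))) => X i ω)) = X k := rfl
        rw [e1, e2] at h2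
        exact h2
    have e3 : ∀ ω, D.indicator (fun ω => P m ω * X k ω) ω
        = D.indicator (P m) ω * X k ω := by
      intro ω
      by_cases hω : ω ∈ D <;> simp [Set.indicator, hω]
    rw [integral_congr_ae (Filter.Eventually.of_forall e3)]
    rw [hindF.integral_fun_mul_eq_mul_integral ((hPint m).indicator hDm).aestronglyMeasurable
      (hXint k).aestronglyMeasurable]
    rw [hmean k, mul_zero]
  -- successor formula for P
  have hPsucc : ∀ (m : ℕ) (hm : m < n) ω, P (m + 1) ω = P m ω + X ⟨m, hm⟩ ω := by
    intro m hm ω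
    simp only [hPdef]
    have : Finset.univ.filter (fun i : Fin n => (i : ℕ) < m + 1)
        = insert (⟨m, hm⟩ : Fin n) (Finset.univ.filter fun i : Fin n => (i : ℕ) < m) := by
      ext i
      simp only [Finset.mem_filter, Finset.mem_univ, true_and, Finset.mem_insert,
        Fin.ext_iff]
      omega
    rw [this, Finset.sum_insert (by simp)]
    ring
  -- decomposition of the second moment on D ∈ {univ, B m}
  have hdecomp : ∀ (m : ℕ) (hm : m < n) (D : Set Ω), D = Set.univ ∨ D = B m →
      ∫ ω in D, (P (m + 1) ω) ^ 2 ∂μ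
        = ∫ ω in D, (P m ω) ^ 2 ∂μ + ∫ ω in D, (X ⟨m, hm⟩ ω) ^ 2 ∂μ := by
    intro m hm D hD
    set k : Fin n := ⟨m, hm⟩ with hkdef
    have hDm : MeasurableSet D := by
      rcases hD with h | h
      · rw [h]; exact MeasurableSet.univ
      · rw [h]; exact hBmeas m
    have e : ∀ ω, (P (m + 1) ω) ^ 2
        = ((P m ω) ^ 2 + (X k ω) ^ 2) + 2 * (P m ω * X k ω) := by
      intro ω; rw [hPsucc m hm ω]; ring
    have i1 : IntegrableOn (fun ω => (P m ω) ^ 2 + (X k ω) ^ 2) D μ :=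
      ((hPsq_int m).add (hXsq_int k)).integrableOn
    have i2 : IntegrableOn (fun ω => 2 * (P m ω * X k ω)) D μ :=
      ((hPX_int m hm).const_mul 2).integrableOn
    have key0 : ∫ ω in D, P m ω * X k ω ∂μ = 0 := by
      rw [← integral_indicator hDm]
      exact hcross m hm D hD
    calc ∫ ω in D, (P (m + 1) ω) ^ 2 ∂μ
        = ∫ ω in D, (((P m ω) ^ 2 + (X k ω) ^ 2) + 2 * (P m ω * X k ω)) ∂μ := by
          exact integral_congr_ae (Filter.Eventually.of_forall fun ω => e ω)
      _ = (∫ ω in D, ((P m ω) ^ 2 + (X k ω) ^ 2) ∂μ)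
            + ∫ ω in D, 2 * (P m ω * X k ω) ∂μ := integral_add i1 i2
      _ = (∫ ω in D, (P m ω) ^ 2 ∂μ) + (∫ ω in D, (X k ω) ^ 2 ∂μ)
            + 2 * ∫ ω in D, P m ω * X k ω ∂μ := by
          rw [integral_add (hPsq_int m).integrableOn (hXsq_int k).integrableOn,
            integral_const_mul]
      _ = ∫ ω in D, (P m ω) ^ 2 ∂μ + ∫ ω in D, (X k ω) ^ 2 ∂μ := by
          rw [key0]; ring
  -- the sequences h, V, w
  set Hh : ℕ → ℝ := fun m => ∫ ω in B m, (P m ω) ^ 2 ∂μ with hHhdef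
  set V : ℕ → ℝ := fun m => ∫ ω, (P m ω) ^ 2 ∂μ with hVdef
  set w : ℕ → ℝ := fun m => V m - Hh m with hwdef
  have hP0 : ∀ ω, P 0 ω = 0 := by
    intro ω
    simp [hPdef]
  have hw0 : w 0 = 0 := by
    simp only [hwdef, hVdef, hHhdef, hB0]
    simp [hP0]
  have hwnn : ∀ m, 0 ≤ w m := by
    intro m
    have := setIntegral_le_integral (s := B m) (hPsq_int m)
      (Filter.Eventually.of_forall fun ω => sq_nonneg (P m ω))
    simp only [hwdef, hVdef, hHhdef]
    linarith
  -- step inequality: c m * (Hh (m+1) - Hh m) dominates the A m contribution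
  have hA_le : ∀ m, m < n →
      t ^ 2 * (μ (B (m + 1) \ B m)).toReal ≤ c m * (Hh (m + 1) - Hh m) := by
    intro m hm
    have hAm : MeasurableSet (B (m + 1) \ B m) := (hBmeas (m + 1)).diff (hBmeas m)
    -- pointwise bound on A m
    have hpt : ∀ ω ∈ B (m + 1) \ B m, t ^ 2 ≤ c m * (P (m + 1) ω) ^ 2 := by
      rintro ω ⟨h1, h2⟩
      obtain ⟨j, hj1, hj2, hj3⟩ := h1
      rcases Nat.lt_succ_iff_lt_or_eq.1 hj1 with hj | hj
      · exact absurd ⟨j, hj, hj2, hj3⟩ h2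
      · subst hj; exact hj3
    have step1 : t ^ 2 * (μ (B (m + 1) \ B m)).toReal
        ≤ ∫ ω in B (m + 1) \ B m, c m * (P (m + 1) ω) ^ 2 ∂μ := by
      have := setIntegral_mono_on (integrableOn_const (measure_ne_top μ _))
        (((hPsq_int (m + 1)).const_mul (c m)).integrableOn) hAm hpt
      calc t ^ 2 * (μ (B (m + 1) \ B m)).toReal
          = ∫ _ω in B (m + 1) \ B m, t ^ 2 ∂μ := by
            rw [setIntegral_const, smul_eq_mul, mul_comm]; rfl
        _ ≤ _ := this
    have hunion : (B (m + 1) \ B m) ∪ B m = B (m + 1) := Set.diff_union_of_subset (hBsub m)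
    have step2 : ∫ ω in B (m + 1) \ B m, (P (m + 1) ω) ^ 2 ∂μ
        = (∫ ω in B (m + 1), (P (m + 1) ω) ^ 2 ∂μ) - ∫ ω in B m, (P (m + 1) ω) ^ 2 ∂μ := by
      have := setIntegral_union (s := B (m + 1) \ B m) (t := B m)
        (f := fun ω => (P (m + 1) ω) ^ 2) Set.disjoint_sdiff_left
        (hBmeas m) ((hPsq_int (m + 1)).integrableOn) ((hPsq_int (m + 1)).integrableOn)
      rw [hunion] at this
      linarith [this]
    have step3 : Hh m ≤ ∫ ω in B m, (P (m + 1) ω) ^ 2 ∂μ := by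
      have := hdecomp m hm (B m) (Or.inr rfl)
      have hnn : 0 ≤ ∫ ω in B m, (X ⟨m, hm⟩ ω) ^ 2 ∂μ :=
        setIntegral_nonneg (hBmeas m) fun ω _ => sq_nonneg _
      simp only [hHhdef]
      linarith
    calc t ^ 2 * (μ (B (m + 1) \ B m)).toReal
        ≤ ∫ ω in B (m + 1) \ B m, c m * (P (m + 1) ω) ^ 2 ∂μ := step1
      _ = c m * ∫ ω in B (m + 1) \ B m, (P (m + 1) ω) ^ 2 ∂μ := integral_const_mul _ _
      _ ≤ c m * (Hh (m + 1) - Hh m) := by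
          rw [step2]
          apply mul_le_mul_of_nonneg_left _ (hc0 m)
          simp only [hHhdef]
          linarith [step3]
  -- measure telescoping
  have hmeasum : ∀ M : ℕ, (μ (B M)).toReal
      = ∑ m ∈ Finset.range M, (μ (B (m + 1) \ B m)).toReal := by
    intro M
    induction M with
    | zero => simp [hB0]
    | succ M ih =>
      rw [Finset.sum_range_succ, ← ih]
      have h1 : μ (B (M + 1)) = μ (B (M + 1) \ B M) + μ (B M) := by
        rw [← measure_union Set.disjoint_sdiff_left (hBmeas M),
          Set.diff_union_of_subset (hBsub M)]
      rw [h1, ENNReal.toReal_add (measure_ne_top μ _) (measure_ne_top μ _)]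
      ring
  -- variance increments
  have hVinc : ∀ (m : ℕ) (hm : m < n),
      V (m + 1) - V m = ∫ ω, (X ⟨m, hm⟩ ω) ^ 2 ∂μ := by
    intro m hm
    have := hdecomp m hm Set.univ (Or.inl rfl)
    simp only [Measure.restrict_univ] at this
    simp only [hVdef]
    linarith
  -- main chain
  have main : t ^ 2 * (μ (B n)).toReal
      ≤ ∑ m ∈ Finset.range n, c m * (V (m + 1) - V m) := by
    have s1 : t ^ 2 * (μ (B n)).toReal
        ≤ ∑ m ∈ Finset.range n, c m * (Hh (m + 1) - Hh m) := by
      rw [hmeasum n, Finset.mul_sum]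
      exact Finset.sum_le_sum fun m hmem => hA_le m (Finset.mem_range.1 hmem)
    have s2 : ∑ m ∈ Finset.range n, c m * (Hh (m + 1) - Hh m)
        ≤ ∑ m ∈ Finset.range n, c m * (V (m + 1) - V m) := by
      have habel := abel_aux c w n hw0 (fun m _ => hwnn m) hcanti
      have hcw : 0 ≤ c n * w n := mul_nonneg (hc0 n) (hwnn n)
      have hsplit : ∑ m ∈ Finset.range n, c m * (V (m + 1) - V m)
          = (∑ m ∈ Finset.range n, c m * (Hh (m + 1) - Hh m))
            + ∑ m ∈ Finset.range n, c m * (w (m + 1) - w m) := by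
        rw [← Finset.sum_add_distrib]
        apply Finset.sum_congr rfl
        intro m _
        simp only [hwdef]
        ring
      linarith
    linarith
  -- identify the sum with the variance sum
  have hsum_eq : ∑ m ∈ Finset.range n, c m * (V (m + 1) - V m)
      = ∑ k, (α k) ^ 2 * variance (X k) μ := by
    rw [← Fin.sum_univ_eq_sum_range (fun m => c m * (V (m + 1) - V m)) n]
    apply Finset.sum_congr rfl
    intro k _
    have hck : c (k : ℕ) = (α k) ^ 2 := by
      simp only [hcdef]
      rw [dif_pos k.isLt]
    have hvar : variance (X k) μ = ∫ ω, (X k ω) ^ 2 ∂μ := by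
      rw [variance_eq_sub (hL2 k)]
      have e : μ[(X k) ^ 2] = ∫ ω, (X k ω) ^ 2 ∂μ := by
        apply integral_congr_ae
        filter_upwards with ω
        simp
      rw [e, hmean k]
      ring
    rw [hck, hVinc (k : ℕ) k.isLt, hvar]
  -- identify the event with B n
  have hE : {ω | ∃ k : Fin n,
      t ≤ α k * |∑ i ∈ Finset.univ.filter (· ≤ k), X i ω|} = B n := by
    ext ω
    simp only [hBdef, Set.mem_setOf_eq]
    have hfilter : ∀ k : Fin n, (Finset.univ.filter (· ≤ k))
        = Finset.univ.filter (fun i : Fin n => (i : ℕ) < (k : ℕ) + 1) := by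
      intro k
      ext i
      simp only [Finset.mem_filter, Finset.mem_univ, true_and]
      rw [Nat.lt_succ_iff]
      exact Fin.le_def
    constructor
    · rintro ⟨k, hk⟩
      refine ⟨(k : ℕ), k.isLt, k.isLt, ?_⟩
      have hck : c (k : ℕ) = (α k) ^ 2 := by
        simp only [hcdef]; rw [dif_pos k.isLt]
      have hPk : P ((k : ℕ) + 1) ω = ∑ i ∈ Finset.univ.filter (· ≤ k), X i ω := by
        simp only [hPdef]
        rw [hfilter k]
      rw [hck, hPk]
      have habs := abs_nonneg (∑ i ∈ Finset.univ.filter (· ≤ k), X i ω)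
      have h1 : (α k * |∑ i ∈ Finset.univ.filter (· ≤ k), X i ω|) ^ 2
          = (α k) ^ 2 * (∑ i ∈ Finset.univ.filter (· ≤ k), X i ω) ^ 2 := by
        rw [mul_pow, sq_abs]
      nlinarith [hαpos k]
    · rintro ⟨j, hj1, hj2, hj3⟩
      refine ⟨⟨j, hj2⟩, ?_⟩
      have hck : c j = (α ⟨j, hj2⟩) ^ 2 := by
        simp only [hcdef]; rw [dif_pos hj2]
      have hPk : P (j + 1) ω = ∑ i ∈ Finset.univ.filter (· ≤ (⟨j, hj2⟩ : Fin n)), X i ω := by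
        simp only [hPdef]
        rw [hfilter ⟨j, hj2⟩]
      rw [hck, hPk] at hj3
      set A := ∑ i ∈ Finset.univ.filter (· ≤ (⟨j, hj2⟩ : Fin n)), X i ω
      have habs := abs_nonneg A
      have h1 : (α ⟨j, hj2⟩ * |A|) ^ 2 = (α ⟨j, hj2⟩) ^ 2 * A ^ 2 := by
        rw [mul_pow, sq_abs]
      have hu : 0 ≤ α ⟨j, hj2⟩ * |A| := mul_nonneg (hαpos _).le habs
      nlinarith [hαpos (⟨j, hj2⟩ : Fin n)]
  rw [hE, le_div_iff₀ (by positivity : (0 : ℝ) < t ^ 2)]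
  calc (μ (B n)).toReal * t ^ 2 = t ^ 2 * (μ (B n)).toReal := mul_comm _ _
    _ ≤ ∑ m ∈ Finset.range n, c m * (V (m + 1) - V m) := main
    _ = ∑ k, (α k) ^ 2 * variance (X k) μ := hsum_eq
end

section
/- Etemadi inequality (classical): if X_1, …, X_n are independent real random variables and S_k = Σ_{i=1}^k X_i, then for every t > 0, P(max_{1≤k≤n} |S_k| ≥ 3t) ≤ 3 max_{1≤k≤n} P(|S_k| ≥ t). -/
open MeasureTheory ProbabilityTheory Finset

lemma etemadi_aux {Ω : Type*} [MeasurableSpace Ω]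
    (μ : Measure Ω) [IsProbabilityMeasure μ]
    (m : ℕ) (X : Fin (m+1) → Ω → ℝ)
    (hmeas : ∀ k, Measurable (X k))
    (hindep : iIndepFun X μ)
    (S : Fin (m+1) → Ω → ℝ)
    (hS : ∀ j ω, S j ω = ∑ i ∈ Finset.univ.filter (· ≤ j), X i ω)
    (t : ℝ) :
    μ {ω | ∃ k, 3 * t ≤ |S k ω|} ≤ 3 * ⨆ k, μ {ω | t ≤ |S k ω|} := by
  have hSmeas : ∀ j, Measurable (S j) := by
    intro j
    have : S j = fun ω => ∑ i ∈ Finset.univ.filter (· ≤ j), X i ω := by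
      ext ω; exact hS j ω
    rw [this]
    exact Finset.measurable_sum _ fun i _ => hmeas i
  set N : Fin (m+1) := Fin.last m with hN
  set A : Fin (m+1) → Set Ω := fun k => {ω | 3*t ≤ |S k ω| ∧ ∀ j < k, |S j ω| < 3*t} with hA
  set D : Fin (m+1) → Set Ω := fun k => {ω | 2*t ≤ |S N ω - S k ω|} with hD
  set E : Set Ω := {ω | t ≤ |S N ω|} with hE
  set M : ENNReal := ⨆ k, μ {ω | t ≤ |S k ω|} with hM
  have hAmeas : ∀ k, MeasurableSet (A k) := by
    intro k
    have : A k = {ω | 3*t ≤ |S k ω|} ∩ ⋂ j, ⋂ _ : j < k, {ω | |S j ω| < 3*t} := by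
      ext ω; simp [hA, Set.mem_iInter]
    rw [this]
    exact (measurableSet_le measurable_const (hSmeas k).abs).inter
      (MeasurableSet.iInter fun j => MeasurableSet.iInter fun _ =>
        measurableSet_lt (hSmeas j).abs measurable_const)
  have hDmeas : ∀ k, MeasurableSet (D k) :=
    fun k => measurableSet_le measurable_const ((hSmeas N).sub (hSmeas k)).abs
  have hEmeas : MeasurableSet E := measurableSet_le measurable_const (hSmeas N).abs
  -- union of first-hit events
  have hunion : {ω | ∃ k, 3 * t ≤ |S k ω|} = ⋃ k, A k := by
    ext ω
    simp only [Set.mem_setOf_eq, Set.mem_iUnion, hA]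
    constructor
    · rintro ⟨k, hk⟩
      set F : Finset (Fin (m+1)) := Finset.univ.filter (fun j => 3*t ≤ |S j ω|) with hF
      have hne : F.Nonempty := ⟨k, by simp [hF, hk]⟩
      refine ⟨F.min' hne, ?_, ?_⟩
      · have := F.min'_mem hne; simpa [hF] using this
      · intro j hj
        by_contra hcon
        push_neg at hcon
        have : j ∈ F := by simp [hF, hcon]
        exact absurd (F.min'_le j this) (not_le.2 hj)
    · rintro ⟨k, hk, -⟩; exact ⟨k, hk⟩
  -- disjointness
  have hdisj : Pairwise (Function.onFun Disjoint A) := by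
    intro k k' hne
    rcases lt_or_gt_of_ne hne with h | h
    · refine Set.disjoint_left.2 fun ω hω hω' => ?_
      exact absurd hω.1 (not_le.2 (hω'.2 k h))
    · refine Set.disjoint_left.2 fun ω hω hω' => ?_
      exact absurd hω'.1 (not_le.2 (hω.2 k' h))
  -- pointwise containment
  have hsub : ∀ k, A k ⊆ (A k ∩ E) ∪ (A k ∩ D k) := by
    intro k ω hω
    by_cases hEω : ω ∈ E
    · exact Or.inl ⟨hω, hEω⟩
    · refine Or.inr ⟨hω, ?_⟩
      simp only [hE, Set.mem_setOf_eq, not_le] at hEω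
      have h1 : 3*t ≤ |S k ω| := hω.1
      have h2 : |S k ω| - |S N ω| ≤ |S k ω - S N ω| := abs_sub_abs_le_abs_sub _ _
      have h3 : |S k ω - S N ω| = |S N ω - S k ω| := abs_sub_comm _ _
      simp only [hD, Set.mem_setOf_eq]
      linarith
  -- D k small
  have hDle : ∀ k, μ (D k) ≤ 2 * M := by
    intro k
    have hsub2 : D k ⊆ E ∪ {ω | t ≤ |S k ω|} := by
      intro ω hω
      simp only [hD, Set.mem_setOf_eq] at hω
      by_contra hcon
      simp only [Set.mem_union, hE, Set.mem_setOf_eq, not_or, not_le] at hcon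
      have := abs_sub (S N ω) (S k ω)
      linarith [hcon.1, hcon.2]
    calc μ (D k) ≤ μ E + μ {ω | t ≤ |S k ω|} :=
          le_trans (measure_mono hsub2) (measure_union_le _ _)
      _ ≤ M + M := add_le_add (le_iSup (fun k => μ {ω | t ≤ |S k ω|}) N)
          (le_iSup (fun k => μ {ω | t ≤ |S k ω|}) k)
      _ = 2 * M := (two_mul M).symm
  -- independence
  have key : ∀ k, μ (A k ∩ D k) = μ (A k) * μ (D k) := by
    intro k
    set Sset : Finset (Fin (m+1)) := Finset.univ.filter (· ≤ k) with hSset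
    set Tset : Finset (Fin (m+1)) := Finset.univ.filter (fun i => k < i) with hTset
    have hdisjST : Disjoint Sset Tset := by
      rw [Finset.disjoint_left]
      intro i hi hi'
      simp only [hSset, hTset, Finset.mem_filter] at hi hi'
      exact absurd hi'.2 (not_lt.2 hi.2)
    have hIF := hindep.indepFun_finset Sset Tset hdisjST hmeas
    set g : Fin (m+1) → (↥Sset → ℝ) → ℝ :=
      fun j v => ∑ i ∈ Sset.attach.filter (fun i => i.1 ≤ j), v i with hg
    have hgmeas : ∀ j, Measurable (g j) :=
      fun j => Finset.measurable_sum _ fun i _ => measurable_pi_apply i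
    set σf : (↥Tset → ℝ) → ℝ := fun v => ∑ i ∈ Tset.attach, v i with hσ
    have hσmeas : Measurable σf := Finset.measurable_sum _ fun i _ => measurable_pi_apply i
    set B : Set (↥Sset → ℝ) := {v | 3*t ≤ |g k v| ∧ ∀ j < k, |g j v| < 3*t} with hB
    have hBmeas : MeasurableSet B := by
      have : B = {v | 3*t ≤ |g k v|} ∩ ⋂ j, ⋂ _ : j < k, {v | |g j v| < 3*t} := by
        ext v; simp [hB, Set.mem_iInter]
      rw [this]
      exact (measurableSet_le measurable_const (hgmeas k).abs).inter
        (MeasurableSet.iInter fun j => MeasurableSet.iInter fun _ =>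
          measurableSet_lt (hgmeas j).abs measurable_const)
    set C : Set (↥Tset → ℝ) := {v | 2*t ≤ |σf v|} with hC
    have hCmeas : MeasurableSet C := measurableSet_le measurable_const hσmeas.abs
    -- g j applied to the data recovers S j, for j ≤ k
    have hgS : ∀ j, j ≤ k → ∀ ω, g j (fun i : ↥Sset => X i ω) = S j ω := by
      intro j hj ω
      rw [hS]
      simp only [hg]
      rw [Finset.sum_filter, Finset.sum_attach Sset (fun i => if i ≤ j then X i ω else 0),
        ← Finset.sum_filter]
      congr 1
      ext i
      simp only [hSset, Finset.mem_filter, Finset.mem_univ, true_and]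
      exact ⟨fun h => h.2, fun h => ⟨le_trans h hj, h⟩⟩
    -- σf applied to the data recovers S N - S k
    have hσS : ∀ ω, σf (fun i : ↥Tset => X i ω) = S N ω - S k ω := by
      intro ω
      rw [hS, hS]
      simp only [hσ]
      rw [Finset.sum_attach Tset (fun i => X i ω)]
      have hfullN : Finset.univ.filter (· ≤ N) = (Finset.univ : Finset (Fin (m+1))) := by
        refine Finset.filter_true_of_mem fun i _ => Fin.le_last i
      have hTnot : Tset = Finset.univ.filter (fun i => ¬ i ≤ k) := by
        simp only [hTset, not_le]
      rw [hfullN, hTnot, eq_sub_iff_add_eq, add_comm]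
      exact Finset.sum_filter_add_sum_filter_not _ _ _
    have hApre : A k = (fun ω (i : ↥Sset) => X i ω) ⁻¹' B := by
      ext ω
      simp only [hA, hB, Set.mem_setOf_eq, Set.mem_preimage]
      constructor
      · rintro ⟨h1, h2⟩
        exact ⟨by rw [hgS k le_rfl ω]; exact h1,
          fun j hj => by rw [hgS j hj.le ω]; exact h2 j hj⟩
      · rintro ⟨h1, h2⟩
        rw [hgS k le_rfl ω] at h1
        exact ⟨h1, fun j hj => by have := h2 j hj; rwa [hgS j hj.le ω] at this⟩
    have hDpre : D k = (fun ω (i : ↥Tset) => X i ω) ⁻¹' C := by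
      ext ω
      simp only [hD, hC, Set.mem_setOf_eq, Set.mem_preimage, hσS ω]
    rw [hApre, hDpre]
    exact hIF.measure_inter_preimage_eq_mul B C hBmeas hCmeas
  -- final computation
  rw [hunion, measure_iUnion hdisj hAmeas]
  have h1 : ∀ k, μ (A k) ≤ μ (A k ∩ E) + μ (A k ∩ D k) :=
    fun k => le_trans (measure_mono (hsub k)) (measure_union_le _ _)
  have hsum1 : ∑' k, μ (A k ∩ E) ≤ M := by
    have hd2 : Pairwise (Function.onFun Disjoint (fun k => A k ∩ E)) :=
      fun k k2 hne => ((hdisj hne).mono Set.inter_subset_left Set.inter_subset_left)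
    rw [← measure_iUnion hd2 (fun k => (hAmeas k).inter hEmeas)]
    refine le_trans (measure_mono ?_) (le_iSup (fun k => μ {ω | t ≤ |S k ω|}) N)
    exact Set.iUnion_subset fun k => Set.inter_subset_right
  have hsumA : ∑' k, μ (A k) ≤ 1 := by
    rw [← measure_iUnion hdisj hAmeas]; exact prob_le_one
  have hsum2 : ∑' k, μ (A k ∩ D k) ≤ 2 * M := by
    calc ∑' k, μ (A k ∩ D k) = ∑' k, μ (A k) * μ (D k) := by simp_rw [key]
      _ ≤ ∑' k, μ (A k) * (2*M) :=
          ENNReal.tsum_le_tsum fun k => mul_le_mul_right (hDle k) _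
      _ = (∑' k, μ (A k)) * (2*M) := ENNReal.tsum_mul_right
      _ ≤ 1 * (2*M) := mul_le_mul_left hsumA _
      _ = 2*M := one_mul _
  calc ∑' k, μ (A k) ≤ ∑' k, (μ (A k ∩ E) + μ (A k ∩ D k)) := ENNReal.tsum_le_tsum h1
    _ = (∑' k, μ (A k ∩ E)) + ∑' k, μ (A k ∩ D k) := ENNReal.tsum_add
    _ ≤ M + 2*M := add_le_add hsum1 hsum2
    _ = 3*M := by ring

/-- Etemadi's inequality: for independent real random variables `X 1, …, X n`
with partial sums `S k = Σ_{i ≤ k} X i`, for every `t > 0`,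
`P(max_k |S_k| ≥ 3t) ≤ 3 max_k P(|S_k| ≥ t)`. -/
theorem etemadi_inequality {Ω : Type*} [MeasurableSpace Ω]
    (μ : Measure Ω) [IsProbabilityMeasure μ]
    (n : ℕ) (X : Fin n → Ω → ℝ)
    (hmeas : ∀ k, Measurable (X k))
    (hindep : iIndepFun X μ)
    (t : ℝ) (ht : 0 < t) :
    μ {ω | ∃ k : Fin n,
        3 * t ≤ |∑ i ∈ Finset.univ.filter (· ≤ k), X i ω|}
      ≤ 3 * ⨆ k : Fin n,
          μ {ω | t ≤ |∑ i ∈ Finset.univ.filter (· ≤ k), X i ω|} := by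
  cases n with
  | zero =>
      have : {ω : Ω | ∃ k : Fin 0,
          3 * t ≤ |∑ i ∈ Finset.univ.filter (· ≤ k), X i ω|} = ∅ := by
        ext ω; simp [IsEmpty.exists_iff]
      rw [this, measure_empty]
      exact zero_le
  | succ m =>
      exact etemadi_aux μ m X hmeas hindep
        (fun j ω => ∑ i ∈ Finset.univ.filter (· ≤ j), X i ω) (fun j ω => rfl) t
end

section
/- Refined Etemadi bound (classical): with X_1,…,X_n independent and S_k the partial sums, for every t > 0, P(max_{1≤k≤n} |S_k| ≥ 3t) ≤ P(|S_n| ≥ t) + max_{1≤k≤n} P(|S_n − S_k| ≥ 2t), and consequently P(max_{1≤k≤n} |S_k| ≥ 3t) ≤ 2 P(|S_n| ≥ t) + max_{1≤k≤n} P(|S_k| ≥ t). -/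
open MeasureTheory ProbabilityTheory

/-- Refined Etemadi bound: for independent real random variables `X 1, …, X n`
with partial sums `S k = Σ_{i ≤ k} X i` and `S n = Σ_i X i`, for every `t > 0`,
`P(max_k |S_k| ≥ 3t) ≤ P(|S_n| ≥ t) + max_k P(|S_n − S_k| ≥ 2t)`, and
consequently `P(max_k |S_k| ≥ 3t) ≤ 2 P(|S_n| ≥ t) + max_k P(|S_k| ≥ t)`. -/
theorem refined_etemadi_bound {Ω : Type*} [MeasurableSpace Ω]
    (μ : Measure Ω) [IsProbabilityMeasure μ]
    (n : ℕ) (X : Fin n → Ω → ℝ)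
    (hmeas : ∀ k, Measurable (X k))
    (hindep : iIndepFun X μ)
    (t : ℝ) (ht : 0 < t) :
    (μ {ω | ∃ k : Fin n,
        3 * t ≤ |∑ i ∈ Finset.univ.filter (· ≤ k), X i ω|}
      ≤ μ {ω | t ≤ |∑ i, X i ω|}
        + ⨆ k : Fin n, μ {ω | 2 * t ≤
            |∑ i, X i ω - ∑ i ∈ Finset.univ.filter (· ≤ k), X i ω|}) ∧
    (μ {ω | ∃ k : Fin n,
        3 * t ≤ |∑ i ∈ Finset.univ.filter (· ≤ k), X i ω|}
      ≤ 2 * μ {ω | t ≤ |∑ i, X i ω|}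
        + ⨆ k : Fin n, μ {ω | t ≤
            |∑ i ∈ Finset.univ.filter (· ≤ k), X i ω|}) := by
  classical
  -- Notation
  set Sf : Fin n → Ω → ℝ := fun k ω => ∑ i ∈ Finset.univ.filter (· ≤ k), X i ω with hSf
  set T : Ω → ℝ := fun ω => ∑ i, X i ω with hT
  set A : Fin n → Set Ω :=
    fun k => {ω | 3 * t ≤ |Sf k ω| ∧ ∀ j, j < k → |Sf j ω| < 3 * t} with hA
  set B : Fin n → Set Ω := fun k => {ω | 2 * t ≤ |T ω - Sf k ω|} with hB
  -- Inclusion into the union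
  have hincl : {ω | ∃ k : Fin n, 3 * t ≤ |Sf k ω|}
      ⊆ {ω | t ≤ |T ω|} ∪ ⋃ k, (A k ∩ B k) := by
    intro ω hω
    obtain ⟨k₀, hk₀⟩ := hω
    -- minimal k
    have hne : (Finset.univ.filter (fun k : Fin n => 3 * t ≤ |Sf k ω|)).Nonempty :=
      ⟨k₀, by simpa using hk₀⟩
    set k := (Finset.univ.filter (fun k : Fin n => 3 * t ≤ |Sf k ω|)).min' hne with hk
    have hkmem : 3 * t ≤ |Sf k ω| := by
      have := (Finset.univ.filter (fun k : Fin n => 3 * t ≤ |Sf k ω|)).min'_mem hne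
      simpa using this
    have hkmin : ∀ j, j < k → |Sf j ω| < 3 * t := by
      intro j hj
      by_contra h
      push_neg at h
      have : k ≤ j := Finset.min'_le _ _ (by simpa using h)
      exact absurd hj (not_lt.mpr this)
    by_cases hTω : t ≤ |T ω|
    · exact Or.inl hTω
    · refine Or.inr (Set.mem_iUnion.mpr ⟨k, ⟨hkmem, hkmin⟩, ?_⟩)
      push_neg at hTω
      have h1 : |Sf k ω| - |T ω| ≤ |T ω - Sf k ω| := by
        have := abs_sub_abs_le_abs_sub (Sf k ω) (T ω)
        rwa [abs_sub_comm] at this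
      simp only [hB, Set.mem_setOf_eq]
      linarith
  -- Measurability and independence facts for each k
  have hSmeas : ∀ k, Measurable (Sf k) := fun k =>
    Finset.measurable_sum _ (fun i _ => hmeas i)
  have hTmeas : Measurable T := Finset.measurable_sum _ (fun i _ => hmeas i)
  have hAmeas : ∀ k, MeasurableSet (A k) := by
    intro k
    have h1 : MeasurableSet {ω | 3 * t ≤ |Sf k ω|} :=
      measurableSet_le measurable_const (hSmeas k).abs
    have h2 : MeasurableSet {ω | ∀ j, j < k → |Sf j ω| < 3 * t} := by
      have : {ω | ∀ j, j < k → |Sf j ω| < 3 * t}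
          = ⋂ j, ⋂ (_ : j < k), {ω | |Sf j ω| < 3 * t} := by
        ext ω; simp [Set.mem_iInter]
      rw [this]
      exact MeasurableSet.iInter fun j => MeasurableSet.iInter fun _ =>
        measurableSet_lt (hSmeas j).abs measurable_const
    exact h1.inter h2
  have hBmeas : ∀ k, MeasurableSet (B k) := fun k =>
    measurableSet_le measurable_const ((hTmeas.sub (hSmeas k)).abs)
  -- disjointness of the A's
  have hAdisj : Pairwise (Function.onFun Disjoint A) := by
    have key : ∀ i j : Fin n, i < j → Disjoint (A i) (A j) := by
      intro i j h
      refine Set.disjoint_left.mpr ?_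
      rintro ω ⟨hi, -⟩ ⟨-, hjmin⟩
      exact absurd hi (not_le.mpr (hjmin i h))
    intro i j hij
    rcases hij.lt_or_gt with h | h
    · exact key i j h
    · exact (key j i h).symm
  -- independence: μ (A k ∩ B k) = μ (A k) * μ (B k)
  have hmul : ∀ k, μ (A k ∩ B k) = μ (A k) * μ (B k) := by
    intro k
    set Sk : Finset (Fin n) := Finset.univ.filter (· ≤ k) with hSk
    set Tk : Finset (Fin n) := Finset.univ.filter (fun i => ¬ i ≤ k) with hTk
    have hdisj : Disjoint Sk Tk := by
      simp only [hSk, hTk, Finset.disjoint_left, Finset.mem_filter]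
      tauto
    have hIndep := hindep.indepFun_finset Sk Tk hdisj hmeas
    -- the partial sum in terms of coordinates of Sk
    have hsum : ∀ (j : Fin n), j ≤ k → ∀ ω,
        (∑ i ∈ Finset.univ.filter (fun i : Sk => (i : Fin n) ≤ j),
          (fun (i : Sk) => X i ω) i) = Sf j ω := by
      intro j hj ω
      rw [Finset.sum_filter, Finset.sum_coe_sort Sk (fun i => if i ≤ j then X i ω else 0),
        ← Finset.sum_filter]
      congr 1
      ext i
      simp only [hSk, Finset.mem_filter, Finset.mem_univ, true_and]
      exact ⟨fun h => h.2, fun h => ⟨h.trans hj, h⟩⟩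
    have hsumT : ∀ ω,
        (∑ i : Tk, (fun (i : Tk) => X i ω) i) = T ω - Sf k ω := by
      intro ω
      rw [Finset.sum_coe_sort Tk (fun i => X i ω)]
      have := Finset.sum_filter_add_sum_filter_not Finset.univ (· ≤ k) (fun i => X i ω)
      simp only [hT, hSf, hTk]
      linarith [this]
    -- express A k and B k as preimages
    set CS : Set (Sk → ℝ) := {v | 3 * t ≤
        |∑ i ∈ Finset.univ.filter (fun i : Sk => (i : Fin n) ≤ k), v i| ∧
        ∀ j, j < k → |∑ i ∈ Finset.univ.filter (fun i : Sk => (i : Fin n) ≤ j), v i| < 3 * t}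
      with hCS
    set DT : Set (Tk → ℝ) := {w | 2 * t ≤ |∑ i : Tk, w i|} with hDT
    have hACS : A k = (fun ω (i : Sk) => X i ω) ⁻¹' CS := by
      ext ω
      simp only [hA, hCS, Set.mem_setOf_eq, Set.mem_preimage]
      constructor
      · rintro ⟨h1, h2⟩
        exact ⟨by rw [hsum k le_rfl ω]; exact h1,
          fun j hj => by rw [hsum j hj.le ω]; exact h2 j hj⟩
      · rintro ⟨h1, h2⟩
        rw [hsum k le_rfl ω] at h1
        exact ⟨h1, fun j hj => by have := h2 j hj; rwa [hsum j hj.le ω] at this⟩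
    have hBDT : B k = (fun ω (i : Tk) => X i ω) ⁻¹' DT := by
      ext ω
      simp only [hB, hDT, Set.mem_setOf_eq, Set.mem_preimage]
      rw [hsumT ω]
    have hCSmeas : MeasurableSet CS := by
      have hg : ∀ (j : Fin n),
          Measurable (fun v : Sk → ℝ =>
            ∑ i ∈ Finset.univ.filter (fun i : Sk => (i : Fin n) ≤ j), v i) :=
        fun j => Finset.measurable_sum _ (fun i _ => measurable_pi_apply i)
      have h1 : MeasurableSet {v : Sk → ℝ | 3 * t ≤
          |∑ i ∈ Finset.univ.filter (fun i : Sk => (i : Fin n) ≤ k), v i|} :=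
        measurableSet_le measurable_const (hg k).abs
      have h2 : MeasurableSet {v : Sk → ℝ | ∀ j, j < k →
          |∑ i ∈ Finset.univ.filter (fun i : Sk => (i : Fin n) ≤ j), v i| < 3 * t} := by
        have : {v : Sk → ℝ | ∀ j, j < k →
            |∑ i ∈ Finset.univ.filter (fun i : Sk => (i : Fin n) ≤ j), v i| < 3 * t}
            = ⋂ j, ⋂ (_ : j < k), {v : Sk → ℝ |
              |∑ i ∈ Finset.univ.filter (fun i : Sk => (i : Fin n) ≤ j), v i| < 3 * t} := by
          ext v; simp [Set.mem_iInter]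
        rw [this]
        exact MeasurableSet.iInter fun j => MeasurableSet.iInter fun _ =>
          measurableSet_lt (hg j).abs measurable_const
      exact h1.inter h2
    have hDTmeas : MeasurableSet DT :=
      measurableSet_le measurable_const
        ((Finset.measurable_sum _ (fun i _ => measurable_pi_apply i)).abs)
    rw [hACS, hBDT]
    exact hIndep.measure_inter_preimage_eq_mul CS DT hCSmeas hDTmeas
  -- sum of μ (A k) is at most 1
  have hAsum : ∑ k, μ (A k) ≤ 1 := by
    have := measure_iUnion (μ := μ) hAdisj hAmeas
    rw [tsum_fintype] at this
    rw [← this]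
    exact prob_le_one
  -- first inequality
  have key : μ {ω | ∃ k : Fin n, 3 * t ≤ |Sf k ω|}
      ≤ μ {ω | t ≤ |T ω|} + ⨆ k : Fin n, μ (B k) := by
    calc μ {ω | ∃ k : Fin n, 3 * t ≤ |Sf k ω|}
        ≤ μ ({ω | t ≤ |T ω|} ∪ ⋃ k, (A k ∩ B k)) := measure_mono hincl
      _ ≤ μ {ω | t ≤ |T ω|} + μ (⋃ k, (A k ∩ B k)) := measure_union_le _ _
      _ ≤ μ {ω | t ≤ |T ω|} + ∑ k, μ (A k ∩ B k) := by
          gcongr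
          exact measure_iUnion_fintype_le μ _
      _ ≤ μ {ω | t ≤ |T ω|} + ⨆ k : Fin n, μ (B k) := by
          gcongr
          calc ∑ k, μ (A k ∩ B k) = ∑ k, μ (A k) * μ (B k) := by
                exact Finset.sum_congr rfl fun k _ => hmul k
            _ ≤ ∑ k, μ (A k) * (⨆ k : Fin n, μ (B k)) := by
                gcongr with k
                exact le_iSup (fun k => μ (B k)) k
            _ = (∑ k, μ (A k)) * (⨆ k : Fin n, μ (B k)) := by
                rw [Finset.sum_mul]
            _ ≤ 1 * (⨆ k : Fin n, μ (B k)) := by gcongr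
            _ = ⨆ k : Fin n, μ (B k) := one_mul _
  refine ⟨key, ?_⟩
  -- second inequality
  have step2 : (⨆ k : Fin n, μ (B k))
      ≤ μ {ω | t ≤ |T ω|} + ⨆ k : Fin n, μ {ω | t ≤ |Sf k ω|} := by
    refine iSup_le fun k => ?_
    have hsub : B k ⊆ {ω | t ≤ |T ω|} ∪ {ω | t ≤ |Sf k ω|} := by
      intro ω hω
      simp only [hB, Set.mem_setOf_eq] at hω
      simp only [Set.mem_union, Set.mem_setOf_eq]
      by_contra h
      push_neg at h
      obtain ⟨h1, h2⟩ := h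
      have := abs_sub (T ω) (Sf k ω)
      linarith
    calc μ (B k) ≤ μ ({ω | t ≤ |T ω|} ∪ {ω | t ≤ |Sf k ω|}) := measure_mono hsub
      _ ≤ μ {ω | t ≤ |T ω|} + μ {ω | t ≤ |Sf k ω|} := measure_union_le _ _
      _ ≤ μ {ω | t ≤ |T ω|} + ⨆ k : Fin n, μ {ω | t ≤ |Sf k ω|} := by
          gcongr
          exact le_iSup (fun k => μ {ω | t ≤ |Sf k ω|}) k
  calc μ {ω | ∃ k : Fin n, 3 * t ≤ |Sf k ω|}
      ≤ μ {ω | t ≤ |T ω|} + ⨆ k : Fin n, μ (B k) := key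
    _ ≤ μ {ω | t ≤ |T ω|} + (μ {ω | t ≤ |T ω|}
        + ⨆ k : Fin n, μ {ω | t ≤ |Sf k ω|}) := by gcongr
    _ = 2 * μ {ω | t ≤ |T ω|} + ⨆ k : Fin n, μ {ω | t ≤ |Sf k ω|} := by
        rw [two_mul, add_assoc]
end

section
/- Unit-bound comparison of spectral projections: for commuting self-adjoint operators a, b with spectral projections, if ⟨|a|ξ,ξ⟩ ≥ 3λ and ⟨|b|ξ,ξ⟩ ≤ λ for a unit vector ξ, then ⟨|b − a|ξ,ξ⟩ ≥ 2λ; consequently, for projections p ≤ 1_{[3λ,∞)}(|a|), one has p ∧ 1_{[0,λ]}(|b|) ≤ p ∧ 1_{[2λ,∞)}(|b − a|). -/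
section AuxCFC

variable {A : Type*} [CStarAlgebra A]

/-- If `x` commutes with a selfadjoint `a`, then `x` commutes with `cfc f a`. -/
lemma commute_cfc_aux {a x : A} (ha : IsSelfAdjoint a)
    (hx : Commute x a) (f : ℝ → ℝ) : Commute x (cfc f a) := by
  by_cases hf : ContinuousOn f (spectrum ℝ a)
  · rw [cfc_apply f a ha hf]
    suffices h : ∀ g : C(spectrum ℝ a, ℝ), Commute x (cfcHom ha g) from h _
    intro g
    let S : Subalgebra ℝ C(spectrum ℝ a, ℝ) :=
      Subalgebra.comap (cfcHom ha (R := ℝ)).toAlgHom (Subalgebra.centralizer ℝ {x})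
    have hmem : ∀ g : C(spectrum ℝ a, ℝ),
        g ∈ S ↔ x * cfcHom ha g = cfcHom ha g * x := by
      intro g
      simp only [S, Subalgebra.mem_comap, Subalgebra.mem_centralizer_iff,
        Set.mem_singleton_iff, forall_eq]
      rfl
    have hSc : IsClosed (S : Set C(spectrum ℝ a, ℝ)) := by
      have h1 : IsClosed {y : A | x * y = y * x} :=
        isClosed_eq (continuous_const.mul continuous_id) (continuous_id.mul continuous_const)
      have h2 : (S : Set C(spectrum ℝ a, ℝ)) =
          (cfcHom ha (R := ℝ)) ⁻¹' {y : A | x * y = y * x} := by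
        ext g
        simpa using hmem g
      rw [h2]
      exact h1.preimage (cfcHom_isClosedEmbedding ha).continuous
    have hpoly : polynomialFunctions (spectrum ℝ a) ≤ S := by
      rw [polynomialFunctions.eq_adjoin_X]
      apply Algebra.adjoin_le
      intro q hq
      rw [Set.mem_singleton_iff] at hq
      subst hq
      rw [SetLike.mem_coe, hmem]
      have hid : (Polynomial.toContinuousMapOnAlgHom (spectrum ℝ a)) Polynomial.X
          = (ContinuousMap.id ℝ).restrict (spectrum ℝ a) := by
        ext z; simp
      rw [hid, cfcHom_id ha, hx.eq]
    have htop : (⊤ : Subalgebra ℝ C(spectrum ℝ a, ℝ)) ≤ S := by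
      rw [← polynomialFunctions.topologicalClosure (spectrum ℝ a)]
      exact Subalgebra.topologicalClosure_minimal hpoly hSc
    exact (hmem g).mp (htop (by trivial))
  · rw [cfc_apply_of_not_continuousOn a hf]
    exact Commute.zero_right x


variable [PartialOrder A] [StarOrderedRing A]

/-- product of commuting nonneg elements is nonneg -/
lemma mul_nonneg_of_commute' {P Q : A} (hP : 0 ≤ P) (hQ : 0 ≤ Q) (h : Commute P Q) :
    0 ≤ P * Q := by
  have hP' : IsSelfAdjoint P := .of_nonneg hP
  set s := cfc Real.sqrt P with hs
  have hss : s * s = P := by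
    rw [hs, ← cfc_mul ..]
    have h1 : (spectrum ℝ P).EqOn (fun t => Real.sqrt t * Real.sqrt t) id := fun t ht =>
      Real.mul_self_sqrt (spectrum_nonneg_of_nonneg hP ht)
    rw [cfc_congr h1, cfc_id ℝ P]
  have hs_sa : IsSelfAdjoint s := cfc_predicate _ P
  have hcomm : Commute Q s := commute_cfc_aux hP' h.symm _
  calc (0 : A) ≤ star s * Q * s := star_left_conjugate_nonneg hQ s
    _ = s * Q * s := by rw [hs_sa.star_eq]
    _ = s * s * Q := by rw [mul_assoc, hcomm.eq, ← mul_assoc]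
    _ = P * Q := by rw [hss]

private noncomputable def nf : ℝ → ℝ := fun t => max (-t) 0

private lemma nf_cont : Continuous nf := (continuous_neg).max continuous_const

/-- commuting nonneg elements: `Y * Y ≤ X * X → Y ≤ X`. -/
lemma le_of_sq_le_sq' {X Y : A} (hX : 0 ≤ X) (hY : 0 ≤ Y) (hcomm : Commute X Y)
    (h : Y * Y ≤ X * X) : Y ≤ X := by
  have hXsa : IsSelfAdjoint X := .of_nonneg hX
  have hYsa : IsSelfAdjoint Y := .of_nonneg hY
  set u := X - Y with hu
  have husa : IsSelfAdjoint u := hXsa.sub hYsa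
  set z := cfc nf u with hz
  have hz_sa : IsSelfAdjoint z := cfc_predicate _ u
  have hz0 : 0 ≤ z := cfc_nonneg fun t _ => le_max_right _ _
  have hzX : Commute X z := commute_cfc_aux husa (by rw [hu]; exact (Commute.refl X).sub_right hcomm) _
  have hzY : Commute Y z := commute_cfc_aux husa (by rw [hu]; exact hcomm.symm.sub_right (Commute.refl Y)) _
  have hzu : Commute u z := commute_cfc_aux husa (Commute.refl u) _
  -- u * z = -(z * z)
  have huz : u * z = -(z * z) := by
    have e1 : u * z = cfc (fun t => t * nf t) u := by
      rw [cfc_mul _ _ u (by fun_prop) nf_cont.continuousOn, cfc_id' ℝ u]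
    have e2 : z * z = cfc (fun t => nf t * nf t) u := by
      rw [cfc_mul _ _ u nf_cont.continuousOn nf_cont.continuousOn]
    rw [e1, e2, ← cfc_neg]
    apply cfc_congr
    intro t _
    simp only [nf]
    rcases le_total 0 t with ht | ht
    · simp [max_eq_right (neg_nonpos_of_nonneg ht)]
    · rw [max_eq_left (by linarith)]; ring
  -- key conjugation
  have hkey : 0 ≤ -((z * z * z) * (X + Y)) := by
    have h1 : (0 : A) ≤ z * (X * X - Y * Y) * z := by
      have := star_left_conjugate_nonneg (sub_nonneg.mpr h) z
      rwa [hz_sa.star_eq] at this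
    have h2 : X * X - Y * Y = u * (X + Y) := by
      rw [hu]; rw [sub_mul, mul_add, mul_add, hcomm.eq]; abel
    have h3 : z * (u * (X + Y)) * z = -((z * z * z) * (X + Y)) := by
      have hXYz : Commute (X + Y) z := hzX.add_left hzY
      calc z * (u * (X + Y)) * z = (z * u) * ((X + Y) * z) := by
            rw [mul_assoc, mul_assoc, mul_assoc]
        _ = (u * z) * (z * (X + Y)) := by rw [hzu.eq, hXYz.eq]
        _ = (-(z * z)) * (z * (X + Y)) := by rw [huz]
        _ = -((z * z * z) * (X + Y)) := by noncomm_ring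
    rw [h2, h3] at h1
    exact h1
  have hz3 : 0 ≤ z * z * z :=
    mul_nonneg_of_commute' (mul_nonneg_of_commute' hz0 hz0 (Commute.refl z)) hz0
      ((Commute.refl z).mul_left (Commute.refl z))
  have hz3X : Commute (z * z * z) X := ((hzX.symm.mul_left hzX.symm).mul_left hzX.symm)
  have hz3Y : Commute (z * z * z) Y := ((hzY.symm.mul_left hzY.symm).mul_left hzY.symm)
  have hX3 : 0 ≤ (z * z * z) * X := mul_nonneg_of_commute' hz3 hX hz3X
  have hY3 : 0 ≤ (z * z * z) * Y := mul_nonneg_of_commute' hz3 hY hz3Y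
  have hsum : (z * z * z) * X + (z * z * z) * Y ≤ 0 := by
    rw [neg_nonneg, mul_add] at hkey
    exact hkey
  have e1 : (z * z * z) * X = 0 :=
    le_antisymm (le_trans (le_add_of_nonneg_right hY3) hsum) hX3
  have e2 : (z * z * z) * Y = 0 :=
    le_antisymm (le_trans (le_add_of_nonneg_left hX3) hsum) hY3
  have e3 : (z * z * z) * u = 0 := by
    rw [hu, mul_sub, e1, e2, sub_zero]
  have hzu' : z * u = -(z * z) := by rw [← hzu.eq, huz]
  have e4 : (z * z) * (z * z) = 0 := by
    have : (z * z * z) * u = -((z * z) * (z * z)) := by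
      rw [mul_assoc (z * z) z u, hzu', mul_neg]
    rw [this] at e3
    simpa using e3
  have hw0 : z * z = 0 := by
    have hw : 0 ≤ z * z := mul_nonneg_of_commute' hz0 hz0 (Commute.refl z)
    have := CFC.sqrt_unique e4 hw
    rwa [CFC.sqrt_zero, eq_comm] at this
  have hz_zero : z = 0 := by
    have := CFC.sqrt_unique hw0 hz0
    rwa [CFC.sqrt_zero, eq_comm] at this
  have hupos : 0 ≤ u := by
    have h5 : 0 ≤ u + z := by
      have e5 : u + z = cfc (fun t => t + nf t) u := by
        rw [cfc_add u _ _ (by fun_prop) nf_cont.continuousOn, cfc_id' ℝ u]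
      rw [e5]
      apply cfc_nonneg
      intro t _
      simp only [nf]
      rcases le_total 0 t with ht | ht
      · positivity
      · rw [max_eq_left (by linarith)]; linarith
    rwa [hz_zero, add_zero] at h5
  rw [hu] at hupos
  exact sub_nonneg.mp hupos

lemma abs_eq_cfc {x w : A} (hx : IsSelfAdjoint x) (hw : 0 ≤ w) (h2 : w * w = x * x) :
    w = cfc (fun t : ℝ => |t|) x := by
  have h3 : cfc (fun t : ℝ => |t|) x * cfc (fun t : ℝ => |t|) x = x * x := by
    rw [← cfc_mul _ _ x (by fun_prop) (by fun_prop)]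
    calc cfc (fun t : ℝ => |t| * |t|) x = cfc (fun t : ℝ => t * t) x := by
          apply cfc_congr; intro t _; exact abs_mul_abs_self t
      _ = x * x := by rw [cfc_mul _ _ x (by fun_prop) (by fun_prop), cfc_id' ℝ x]
  have h4 : 0 ≤ cfc (fun t : ℝ => |t|) x := cfc_nonneg fun t _ => abs_nonneg t
  rw [← CFC.sqrt_unique h2 hw, ← CFC.sqrt_unique h3 h4]

lemma abs_add_nonneg' {x : A} (hx : IsSelfAdjoint x) : 0 ≤ cfc (fun t : ℝ => |t|) x + x := by
  have h1 : cfc (fun t : ℝ => |t|) x + x = cfc (fun t : ℝ => |t| + t) x := by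
    rw [cfc_add x _ _ (by fun_prop) (by fun_prop), cfc_id' ℝ x]
  rw [h1]
  exact cfc_nonneg fun t _ => by linarith [neg_abs_le t]

end AuxCFC

/-- Unit-bound comparison of spectral projections: for commuting self-adjoint
operators `a, b` with `|a|, |b|, |b − a|` their absolute values (the positive
square roots of the squares), if a unit vector `ξ` satisfies `⟨|a|ξ, ξ⟩ ≥ 3λ` and
`⟨|b|ξ, ξ⟩ ≤ λ`, then `⟨|b − a|ξ, ξ⟩ ≥ 2λ`.  Consequently, for a projection
`p ≤ 1_{[3λ,∞)}(|a|)`, one has `p ∧ 1_{[0,λ]}(|b|) ≤ p ∧ 1_{[2λ,∞)}(|b − a|)`;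
here the spectral projections `q = 1_{[0,λ]}(|b|)` and `r = 1_{[2λ,∞)}(|b−a|)`
are characterized by their range properties. -/
theorem spectral_projection_comparison {H : Type*} [NormedAddCommGroup H]
    [InnerProductSpace ℂ H] [CompleteSpace H]
    (a b absa absb absd : H →L[ℂ] H)
    (ha : IsSelfAdjoint a) (hb : IsSelfAdjoint b) (hcomm : a * b = b * a)
    (habsa : absa.IsPositive) (habsa2 : absa * absa = a * a)
    (habsb : absb.IsPositive) (habsb2 : absb * absb = b * b)
    (habsd : absd.IsPositive) (habsd2 : absd * absd = (b - a) * (b - a))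
    (lam : ℝ) (hlam : 0 < lam)
    (p q r : H →L[ℂ] H)
    (hp : IsIdempotentElem p) (hpsa : IsSelfAdjoint p)
    (hq : IsIdempotentElem q) (hqsa : IsSelfAdjoint q)
    (hr : IsIdempotentElem r) (hrsa : IsSelfAdjoint r)
    -- `p ≤ 1_{[3λ,∞)}(|a|)` : on the range of `p`, `|a| ≥ 3λ`
    (hpa : ∀ ξ : H, p ξ = ξ → 3 * lam * ‖ξ‖ ^ 2 ≤ ((inner ℂ (absa ξ) ξ : ℂ)).re)
    -- `q = 1_{[0,λ]}(|b|)` : on the range of `q`, `|b| ≤ λ`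
    (hqb : ∀ ξ : H, q ξ = ξ → ((inner ℂ (absb ξ) ξ : ℂ)).re ≤ lam * ‖ξ‖ ^ 2)
    -- `r = 1_{[2λ,∞)}(|b − a|)` : vectors on which `|b − a| ≥ 2λ` lie in its range
    (hrd : ∀ ξ : H, 2 * lam * ‖ξ‖ ^ 2 ≤ ((inner ℂ (absd ξ) ξ : ℂ)).re → r ξ = ξ) :
    (∀ ξ : H, ‖ξ‖ = 1 → 3 * lam ≤ ((inner ℂ (absa ξ) ξ : ℂ)).re →
      ((inner ℂ (absb ξ) ξ : ℂ)).re ≤ lam → 2 * lam ≤ ((inner ℂ (absd ξ) ξ : ℂ)).re) ∧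
    (∀ ξ : H, p ξ = ξ → q ξ = ξ → r ξ = ξ) := by
  have key : ∀ ξ : H, ((inner ℂ (absa ξ) ξ : ℂ)).re ≤
      ((inner ℂ (absb ξ) ξ : ℂ)).re + ((inner ℂ (absd ξ) ξ : ℂ)).re := by
    have ha0 : 0 ≤ absa := (ContinuousLinearMap.nonneg_iff_isPositive absa).mpr habsa
    have hb0 : 0 ≤ absb := (ContinuousLinearMap.nonneg_iff_isPositive absb).mpr habsb
    have hd0 : 0 ≤ absd := (ContinuousLinearMap.nonneg_iff_isPositive absd).mpr habsd
    set d : H →L[ℂ] H := b - a with hd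
    have hcomm' : Commute a b := hcomm
    have hdsa : IsSelfAdjoint d := hb.sub ha
    have hbd : Commute b d := (Commute.refl b).sub_right hcomm'.symm
    have had : Commute a d := hcomm'.sub_right (Commute.refl a)
    have eb : absb = cfc (fun t : ℝ => |t|) b := abs_eq_cfc hb hb0 habsb2
    have ed : absd = cfc (fun t : ℝ => |t|) d := abs_eq_cfc hdsa hd0 habsd2
    have ea : absa = cfc (fun t : ℝ => |t|) a := abs_eq_cfc ha ha0 habsa2
    -- commutation relations
    have cbD : Commute absb d := by
      rw [eb]; exact (commute_cfc_aux hb hbd.symm _).symm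
    have c_bd : Commute absb absd := by
      rw [ed]; exact commute_cfc_aux hdsa cbD _
    have cab : Commute absb a := by
      rw [eb]; exact (commute_cfc_aux hb hcomm' _).symm
    have cad : Commute absd a := by
      rw [ed]; exact (commute_cfc_aux hdsa had _).symm
    have cXa : Commute (absb + absd) a := cab.add_left cad
    have cXabsa : Commute (absb + absd) absa := by
      rw [ea]; exact commute_cfc_aux ha cXa _
    -- the operator u = b * d and its absolute value
    set u : H →L[ℂ] H := b * d with hu
    have husa : IsSelfAdjoint u := by
      rw [IsSelfAdjoint, hu, star_mul, hdsa.star_eq, hb.star_eq, ← hbd.eq]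
    have habs_add : 0 ≤ cfc (fun t : ℝ => |t|) u + u := abs_add_nonneg' husa
    have habsbd : absb * absd = cfc (fun t : ℝ => |t|) u := by
      apply abs_eq_cfc husa (mul_nonneg_of_commute' hb0 hd0 c_bd)
      calc absb * absd * (absb * absd) = absb * (absd * absb) * absd := by noncomm_ring
        _ = absb * (absb * absd) * absd := by rw [← c_bd.eq]
        _ = absb * absb * (absd * absd) := by noncomm_ring
        _ = b * b * (d * d) := by rw [habsb2, habsd2]
        _ = b * (b * d) * d := by noncomm_ring
        _ = b * (d * b) * d := by rw [hbd.eq]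
        _ = u * u := by rw [hu]; noncomm_ring
    -- square comparison
    have haeq : a = b - d := by rw [hd, sub_sub_cancel]
    have expand : (absb + absd) * (absb + absd) - absa * absa =
        (cfc (fun t : ℝ => |t|) u + u) + (cfc (fun t : ℝ => |t|) u + u) := by
      have e1 : absd * absb = absb * absd := c_bd.eq.symm
      have e2 : d * b = b * d := hbd.eq.symm
      have e3 : (absb + absd) * (absb + absd) =
          absb * absb + absd * absd + (absb * absd + absd * absb) := by noncomm_ring
      have e4 : absa * absa = b * b + d * d - (b * d + d * b) := by
        rw [habsa2, haeq]; noncomm_ring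
      rw [e3, e4, habsb2, habsd2, e1, e2, habsbd, ← hu]
      abel
    have hsq : absa * absa ≤ (absb + absd) * (absb + absd) := by
      rw [← sub_nonneg, expand]
      exact add_nonneg habs_add habs_add
    have hle : absa ≤ absb + absd :=
      le_of_sq_le_sq' (add_nonneg hb0 hd0) ha0 cXabsa hsq
    have hpos : ((absb + absd) - absa).IsPositive :=
      (ContinuousLinearMap.le_def absa (absb + absd)).mp hle
    intro ξ
    have h0 := hpos.re_inner_nonneg_left ξ
    simp only [ContinuousLinearMap.sub_apply, ContinuousLinearMap.add_apply,
      inner_sub_left, inner_add_left, map_sub, map_add, RCLike.re_to_complex] at h0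
    linarith
  refine ⟨fun ξ hξ h3 h1 => by linarith [key ξ], fun ξ hpξ hqξ => ?_⟩
  exact hrd ξ (by linarith [key ξ, hpa ξ hpξ, hqb ξ hqξ])
end
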